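/- Let Ξ ⊆ ℝ^k be a compact set, c ≥ 0, and suppose 𝐟 : 𝒫(Ξ) → ℝ^N satisfies ‖𝐟(Q₁) − 𝐟(Q₂)‖ ≤ c · dl_K(Q₁, Q₂) for all Q₁, Q₂ ∈ 𝒫(Ξ). For M ∈ ℕ define the estimator f̂_M : Ξ^M → ℝ^N by f̂_M(ξ¹,…,ξ^M) = 𝐟( (1/M) Σ_{i=1}^M δ_{ξ^i} ). Then f̂_M satisfies ‖f̂_M(x¹,…,x^M) − f̂_M(y¹,…,y^M)‖ ≤ (c/M) Σ_{i=1}^M ‖x^i − y^i‖, and for every M and all P, Q ∈ 𝒫(Ξ), dl_K( P^{⊗M} ∘ f̂_M⁻¹ , Q^{⊗M} ∘ f̂_M⁻¹ ) ≤ c · dl_K(P, Q); i.e., the estimator is quantitatively statistically robust. -/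

import Mathlib

open MeasureTheory

/-- The Kantorovich distance between two Borel measures:
`dl_K(μ,ν) = sup {|∫ g dμ − ∫ g dν| : |g(x) − g(y)| ≤ ‖x − y‖ for all x, y}`. -/
noncomputable def Kdist {E : Type*} [MeasurableSpace E] [NormedAddCommGroup E]
    (μ ν : Measure E) : ℝ :=
  sSup {x : ℝ | ∃ g : E → ℝ, (∀ a b : E, |g a - g b| ≤ ‖a - b‖) ∧
    x = |(∫ y, g y ∂μ) - ∫ y, g y ∂ν|}

section aux
variable {E : Type*} [NormedAddCommGroup E] [MeasurableSpace E] [OpensMeasurableSpace E]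

lemma lip_lipschitzWith {g : E → ℝ} (hg : ∀ a b : E, |g a - g b| ≤ ‖a - b‖) :
    LipschitzWith 1 g :=
  LipschitzWith.of_dist_le_mul fun a b => by
    rw [Real.dist_eq, dist_eq_norm]; simpa using hg a b

lemma Kdist_nonneg (μ ν : Measure E) : 0 ≤ Kdist μ ν :=
  Real.sSup_nonneg (by rintro x ⟨g, -, rfl⟩; exact abs_nonneg _)

lemma Kdist_le {μ ν : Measure E} {B : ℝ} (hB : 0 ≤ B)
    (h : ∀ g : E → ℝ, (∀ a b : E, |g a - g b| ≤ ‖a - b‖) →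
      |(∫ y, g y ∂μ) - ∫ y, g y ∂ν| ≤ B) :
    Kdist μ ν ≤ B :=
  Real.sSup_le (by rintro x ⟨g, hg, rfl⟩; exact h g hg) hB

lemma abs_integral_sub_le {s : Set E} {x₀ : E} {R : ℝ}
    (hR : ∀ y ∈ s, ‖y - x₀‖ ≤ R)
    {g : E → ℝ} (hg : ∀ a b : E, |g a - g b| ≤ ‖a - b‖)
    (P : Measure E) [IsProbabilityMeasure P] (hP : P sᶜ = 0) :
    |(∫ y, g y ∂P) - g x₀| ≤ R := by
  have hs_ae : s ∈ ae P := mem_ae_iff.2 hP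
  have hbd : ∀ᵐ y ∂P, ‖g y - g x₀‖ ≤ R := by
    filter_upwards [hs_ae] with y hy
    rw [Real.norm_eq_abs]
    exact (hg y x₀).trans (hR y hy)
  have hint : Integrable (fun y => g y - g x₀) P := by
    refine Integrable.mono' (integrable_const R) ?_ hbd
    exact (((lip_lipschitzWith hg).continuous.sub continuous_const).stronglyMeasurable).aestronglyMeasurable
  have : ∫ y, g y ∂P = (∫ y, (g y - g x₀) ∂P) + g x₀ := by
    have h' : ∫ y, g y ∂P = ∫ y, ((g y - g x₀) + g x₀) ∂P := by simp
    rw [h', integral_add hint (integrable_const _), integral_const]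
    simp
  rw [this, add_sub_cancel_right, ← Real.norm_eq_abs]
  calc ‖∫ y, (g y - g x₀) ∂P‖ ≤ R * (P Set.univ).toReal :=
        norm_integral_le_of_norm_le_const hbd
    _ = R := by simp

lemma bddAbove_Kset {s : Set E} (hs : IsCompact s) {x₀ : E} (hx₀ : x₀ ∈ s)
    (P Q : Measure E) [IsProbabilityMeasure P] [IsProbabilityMeasure Q]
    (hP : P sᶜ = 0) (hQ : Q sᶜ = 0) :
    BddAbove {x : ℝ | ∃ g : E → ℝ, (∀ a b : E, |g a - g b| ≤ ‖a - b‖) ∧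
      x = |(∫ y, g y ∂P) - ∫ y, g y ∂Q|} := by
  obtain ⟨R, hR⟩ := hs.exists_bound_of_continuousOn
    ((continuous_id.sub continuous_const).continuousOn (s := s))
  refine ⟨R + R, ?_⟩
  rintro x ⟨g, hg, rfl⟩
  have h1 := abs_integral_sub_le hR hg P hP
  have h2 := abs_integral_sub_le hR hg Q hQ
  calc |(∫ y, g y ∂P) - ∫ y, g y ∂Q|
      ≤ |(∫ y, g y ∂P) - g x₀| + |g x₀ - ∫ y, g y ∂Q| := abs_sub_le _ _ _
    _ = |(∫ y, g y ∂P) - g x₀| + |(∫ y, g y ∂Q) - g x₀| := by rw [abs_sub_comm (g x₀)]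
    _ ≤ R + R := add_le_add h1 h2

end aux
section aux2
variable {E : Type*} [NormedAddCommGroup E] [MeasurableSpace E] [OpensMeasurableSpace E]

lemma lipschitzOn_integral_bound {s : Set E} (hs : IsCompact s) {x₀ : E} (hx₀ : x₀ ∈ s)
    {L : ℝ} (hL : 0 ≤ L) {G : E → ℝ}
    (hG : ∀ a ∈ s, ∀ b ∈ s, |G a - G b| ≤ L * ‖a - b‖)
    (P Q : Measure E) [IsProbabilityMeasure P] [IsProbabilityMeasure Q]
    (hP : P sᶜ = 0) (hQ : Q sᶜ = 0) :
    |(∫ y, G y ∂P) - ∫ y, G y ∂Q| ≤ L * Kdist P Q := by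
  have hlon : LipschitzOnWith L.toNNReal G s := by
    rw [lipschitzOnWith_iff_dist_le_mul]
    intro x hx y hy
    rw [Real.dist_eq, dist_eq_norm, Real.coe_toNNReal L hL]
    exact hG x hx y hy
  obtain ⟨G', hG'lip, hEq⟩ := hlon.extend_real
  have hPae : ∫ y, G y ∂P = ∫ y, G' y ∂P := by
    refine integral_congr_ae ?_
    filter_upwards [mem_ae_iff.2 hP] with y hy using hEq hy
  have hQae : ∫ y, G y ∂Q = ∫ y, G' y ∂Q := by
    refine integral_congr_ae ?_
    filter_upwards [mem_ae_iff.2 hQ] with y hy using hEq hy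
  rw [hPae, hQae]
  rcases eq_or_lt_of_le hL with hL0 | hLpos
  · -- L = 0 : G' is constant
    have hconst : ∀ y, G' y = G' x₀ := fun y => by
      have h0 := hG'lip.dist_le_mul y x₀
      rw [← hL0] at h0
      simp only [NNReal.coe_mk, Real.coe_toNNReal', max_self] at h0
      have : dist (G' y) (G' x₀) ≤ 0 := by simpa using h0
      have := le_antisymm this dist_nonneg
      rwa [dist_eq_zero] at this
    have h1 : ∫ y, G' y ∂P = G' x₀ := by
      rw [integral_congr_ae (Filter.Eventually.of_forall hconst)]; simp
    have h2 : ∫ y, G' y ∂Q = G' x₀ := by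
      rw [integral_congr_ae (Filter.Eventually.of_forall hconst)]; simp
    rw [h1, h2, ← hL0]
    simp
  · set u : E → ℝ := fun y => G' y / L with hu
    have hulip : ∀ a b : E, |u a - u b| ≤ ‖a - b‖ := by
      intro a b
      have := hG'lip.dist_le_mul a b
      rw [Real.dist_eq, dist_eq_norm, Real.coe_toNNReal L hL] at this
      rw [hu]
      rw [div_sub_div_same, abs_div, abs_of_pos hLpos, div_le_iff₀ hLpos, mul_comm]
      exact this
    have hKmem : |(∫ y, u y ∂P) - ∫ y, u y ∂Q| ∈
        {x : ℝ | ∃ g : E → ℝ, (∀ a b : E, |g a - g b| ≤ ‖a - b‖) ∧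
          x = |(∫ y, g y ∂P) - ∫ y, g y ∂Q|} := ⟨u, hulip, rfl⟩
    have hle : |(∫ y, u y ∂P) - ∫ y, u y ∂Q| ≤ Kdist P Q :=
      le_csSup (bddAbove_Kset hs hx₀ P Q hP hQ) hKmem
    have hcalc : |(∫ y, G' y ∂P) - ∫ y, G' y ∂Q| = L * |(∫ y, u y ∂P) - ∫ y, u y ∂Q| := by
      have h1 : ∫ y, u y ∂P = (∫ y, G' y ∂P) / L := integral_div L _
      have h2 : ∫ y, u y ∂Q = (∫ y, G' y ∂Q) / L := integral_div L _
      rw [h1, h2, div_sub_div_same, abs_div, abs_of_pos hLpos]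
      field_simp
    rw [hcalc]
    exact mul_le_mul_of_nonneg_left hle hL

lemma pi_compl_null {ι : Type*} [Fintype ι] {α : Type*} [MeasurableSpace α]
    (μ : ι → Measure α) [∀ i, IsProbabilityMeasure (μ i)] {s : Set α}
    (hμ : ∀ i, μ i sᶜ = 0) :
    Measure.pi μ (Set.pi Set.univ fun _ => s)ᶜ = 0 := by
  have h : (Set.pi Set.univ fun _ : ι => s)ᶜ = ⋃ i, Function.eval i ⁻¹' sᶜ := by
    ext x; simp [Set.mem_pi, not_forall, Function.eval]
  rw [h]
  exact measure_iUnion_null fun i => Measure.pi_eval_preimage_null _ (hμ i)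

end aux2
section step
variable {k : ℕ}

local notation "Ek" => EuclideanSpace ℝ (Fin k)

lemma step_lemma {n : ℕ} {s : Set Ek} (hs : IsCompact s)
    {x₀ : Ek} (hx₀ : x₀ ∈ s) {L : ℝ} (hL : 0 ≤ L)
    {h : (Fin (n+1) → Ek) → ℝ} (hcont : Continuous h)
    (hlip : ∀ x y : Fin (n+1) → Ek, (∀ i, x i ∈ s) → (∀ i, y i ∈ s) →
      |h x - h y| ≤ L * ∑ i, ‖x i - y i‖)
    (i₀ : Fin (n+1)) (ρ : Fin (n+1) → Measure Ek)
    [hρp : ∀ i, IsProbabilityMeasure (ρ i)] (hρs : ∀ i, ρ i sᶜ = 0)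
    (P Q : Measure Ek) [IsProbabilityMeasure P] [IsProbabilityMeasure Q]
    (hP : P sᶜ = 0) (hQ : Q sᶜ = 0) :
    |(∫ x, h x ∂Measure.pi (Function.update ρ i₀ P)) -
      ∫ x, h x ∂Measure.pi (Function.update ρ i₀ Q)| ≤ L * Kdist P Q := by
  obtain ⟨C, hC⟩ := (isCompact_univ_pi fun _ : Fin (n+1) => hs).exists_bound_of_continuousOn
    hcont.continuousOn
  set e := MeasurableEquiv.piFinSuccAbove (fun _ : Fin (n+1) => Ek) i₀ with he
  set π' := Measure.pi (fun j : Fin n => ρ (i₀.succAbove j)) with hπ'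
  haveI : IsProbabilityMeasure π' := by rw [hπ']; infer_instance
  have ins : Ek → (Fin n → Ek) → (Fin (n+1) → Ek) := fun ξ y => i₀.insertNth ξ y
  set G : Ek → ℝ := fun ξ => ∫ y, h (i₀.insertNth (α := fun _ => Ek) ξ y) ∂π' with hG
  have hπ's : π' (Set.pi Set.univ fun _ : Fin n => s)ᶜ = 0 :=
    pi_compl_null _ (fun j => hρs _)
  have hmem : ∀ ξ ∈ s, ∀ y : Fin n → Ek, (∀ j, y j ∈ s) →
      ∀ i, i₀.insertNth (α := fun _ => Ek) ξ y i ∈ s := by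
    intro ξ hξ y hy
    refine Fin.succAboveCases i₀ ?_ ?_
    · simpa [Fin.insertNth_apply_same] using hξ
    · intro j
      simpa [Fin.insertNth_apply_succAbove] using hy j
  have hint : ∀ ξ ∈ s, Integrable (fun y => h (i₀.insertNth (α := fun _ => Ek) ξ y)) π' := by
    intro ξ hξ
    have hmeas : Measurable fun y : Fin n → Ek => i₀.insertNth (α := fun _ => Ek) ξ y := by
      have : (fun y : Fin n → Ek => i₀.insertNth (α := fun _ => Ek) ξ y) =
          fun y => e.symm (ξ, y) := rfl
      rw [this]
      exact e.symm.measurable.comp (measurable_const.prodMk measurable_id)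
    refine Integrable.mono' (integrable_const C)
      ((hcont.stronglyMeasurable.comp_measurable hmeas).aestronglyMeasurable) ?_
    filter_upwards [mem_ae_iff.2 hπ's] with y hy
    exact hC _ (fun i _ => hmem ξ hξ y (fun j => hy j (Set.mem_univ j)) i)
  have marg : ∀ μ₀ : Measure Ek, IsProbabilityMeasure μ₀ → μ₀ sᶜ = 0 →
      ∫ x, h x ∂Measure.pi (Function.update ρ i₀ μ₀) = ∫ ξ, G ξ ∂μ₀ := by
    intro μ₀ hμ₀p hμ₀s
    haveI := hμ₀p
    haveI hupd : ∀ i, IsProbabilityMeasure (Function.update ρ i₀ μ₀ i) := by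
      intro i
      rcases eq_or_ne i i₀ with rfl | hne
      · rwa [Function.update_self]
      · rw [Function.update_of_ne hne]; infer_instance
    have mp := measurePreserving_piFinSuccAbove (Function.update ρ i₀ μ₀) i₀
    have h1 : Function.update ρ i₀ μ₀ i₀ = μ₀ := Function.update_self _ _ _
    have h2 : (fun j : Fin n => Function.update ρ i₀ μ₀ (i₀.succAbove j)) =
        fun j => ρ (i₀.succAbove j) :=
      funext fun j => Function.update_of_ne (Fin.succAbove_ne i₀ j) _ _
    rw [h1, h2, ← hπ'] at mp
    have hcomp := (mp.symm e).integral_comp' h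
    rw [← hcomp]
    -- now Fubini
    have hintprod : Integrable (fun z : Ek × (Fin n → Ek) => h (e.symm z)) (μ₀.prod π') := by
      have hnull : (μ₀.prod π') ((s ×ˢ (Set.pi Set.univ fun _ : Fin n => s))ᶜ) = 0 := by
        have hsub : (s ×ˢ (Set.pi Set.univ fun _ : Fin n => s))ᶜ ⊆
            (sᶜ ×ˢ (Set.univ : Set (Fin n → Ek))) ∪
            ((Set.univ : Set Ek) ×ˢ (Set.pi Set.univ fun _ : Fin n => s)ᶜ) := by
          intro z hz
          simp only [Set.mem_compl_iff, Set.mem_prod, not_and_or] at hz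
          rcases hz with hz | hz <;> simp [Set.mem_prod, hz]
        refine measure_mono_null hsub (measure_union_null ?_ ?_) <;>
          rw [Measure.prod_prod] <;> simp [hμ₀s, hπ's]
      refine Integrable.mono' (integrable_const C)
        ((hcont.stronglyMeasurable.comp_measurable e.symm.measurable).aestronglyMeasurable) ?_
      filter_upwards [mem_ae_iff.2 hnull] with z hz
      exact hC _ (fun i _ => hmem z.1 hz.1 z.2 (fun j => hz.2 j (Set.mem_univ j)) i)
    rw [integral_prod _ hintprod]
    rfl
  have hGlip : ∀ a ∈ s, ∀ b ∈ s, |G a - G b| ≤ L * ‖a - b‖ := by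
    intro a ha b hb
    have hsub : G a - G b = ∫ y, (h (i₀.insertNth (α := fun _ => Ek) a y) - h (i₀.insertNth (α := fun _ => Ek) b y)) ∂π' :=
      (integral_sub (hint a ha) (hint b hb)).symm
    rw [hsub, ← Real.norm_eq_abs]
    have hbd : ∀ᵐ y ∂π', ‖h (i₀.insertNth (α := fun _ => Ek) a y) - h (i₀.insertNth (α := fun _ => Ek) b y)‖ ≤ L * ‖a - b‖ := by
      filter_upwards [mem_ae_iff.2 hπ's] with y hy
      have hy' : ∀ j, y j ∈ s := fun j => hy j (Set.mem_univ j)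
      have hsum : ∑ i, ‖i₀.insertNth (α := fun _ => Ek) a y i - i₀.insertNth (α := fun _ => Ek) b y i‖ = ‖a - b‖ := by
        rw [Fin.sum_univ_succAbove (fun i => ‖i₀.insertNth (α := fun _ => Ek) a y i - i₀.insertNth (α := fun _ => Ek) b y i‖) i₀]
        simp [Fin.insertNth_apply_same, Fin.insertNth_apply_succAbove]
      rw [Real.norm_eq_abs]
      calc |h (i₀.insertNth (α := fun _ => Ek) a y) - h (i₀.insertNth (α := fun _ => Ek) b y)|
          ≤ L * ∑ i, ‖i₀.insertNth (α := fun _ => Ek) a y i - i₀.insertNth (α := fun _ => Ek) b y i‖ :=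
            hlip _ _ (hmem a ha y hy') (hmem b hb y hy')
        _ = L * ‖a - b‖ := by rw [hsum]
    calc ‖∫ y, (h (i₀.insertNth (α := fun _ => Ek) a y) - h (i₀.insertNth (α := fun _ => Ek) b y)) ∂π'‖
        ≤ (L * ‖a - b‖) * (π' Set.univ).toReal := norm_integral_le_of_norm_le_const hbd
      _ = L * ‖a - b‖ := by simp
  rw [marg P ‹_› hP, marg Q ‹_› hQ]
  exact lipschitzOn_integral_bound hs hx₀ hL hGlip P Q hP hQ

end step
section emp
variable {E : Type*} [NormedAddCommGroup E] [MeasurableSpace E] [OpensMeasurableSpace E]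
  [MeasurableSingletonClass E]

lemma emp_prob {M : ℕ} (hM : 0 < M) (x : Fin M → E) :
    IsProbabilityMeasure ((M : ENNReal)⁻¹ • ∑ i : Fin M, Measure.dirac (x i)) := by
  constructor
  rw [Measure.smul_apply, Measure.coe_finset_sum]
  simp only [Finset.sum_apply, measure_univ, Finset.sum_const, Finset.card_univ,
    Fintype.card_fin, nsmul_eq_mul, mul_one, smul_eq_mul]
  exact ENNReal.inv_mul_cancel (by exact_mod_cast hM.ne') (ENNReal.natCast_ne_top M)

lemma emp_null {M : ℕ} {s : Set E} (hsm : MeasurableSet s) (x : Fin M → E)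
    (hx : ∀ i, x i ∈ s) :
    ((M : ENNReal)⁻¹ • ∑ i : Fin M, Measure.dirac (x i)) sᶜ = 0 := by
  have hd : ∀ i : Fin M, Measure.dirac (x i) sᶜ = 0 := fun i => by
    rw [Measure.dirac_apply' _ hsm.compl, Set.indicator_of_notMem (by simp [hx i])]
  rw [Measure.smul_apply, Measure.coe_finset_sum]
  simp [hd]

lemma emp_integral {M : ℕ} (x : Fin M → E) {g : E → ℝ}
    (hg : ∀ a b : E, |g a - g b| ≤ ‖a - b‖) :
    ∫ y, g y ∂((M : ENNReal)⁻¹ • ∑ i : Fin M, Measure.dirac (x i)) =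
      (M : ℝ)⁻¹ * ∑ i : Fin M, g (x i) := by
  rw [integral_smul_measure, integral_finset_sum_measure
    (fun i _ => (integrable_const (g (x i))).congr (ae_eq_dirac g).symm)]
  simp [integral_dirac, ENNReal.toReal_inv, smul_eq_mul]

lemma Kdist_emp_le {M : ℕ} (x y : Fin M → E) :
    Kdist ((M : ENNReal)⁻¹ • ∑ i : Fin M, Measure.dirac (x i))
        ((M : ENNReal)⁻¹ • ∑ i : Fin M, Measure.dirac (y i)) ≤
      (M : ℝ)⁻¹ * ∑ i : Fin M, ‖x i - y i‖ := by
  refine Kdist_le (by positivity) ?_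
  intro g hg
  rw [emp_integral x hg, emp_integral y hg, ← mul_sub, ← Finset.sum_sub_distrib,
    abs_mul, abs_of_nonneg (by positivity : (0:ℝ) ≤ (M : ℝ)⁻¹)]
  refine mul_le_mul_of_nonneg_left ?_ (by positivity)
  exact (Finset.abs_sum_le_sum_abs _ _).trans (Finset.sum_le_sum fun i _ => hg _ _)

end emp

lemma coord_abs_le_norm {N : ℕ} (v : EuclideanSpace ℝ (Fin N)) (j : Fin N) :
    |v j| ≤ ‖v‖ := by
  rw [EuclideanSpace.norm_eq]
  have h1 : |v j| = Real.sqrt (‖v j‖ ^ 2) := by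
    rw [Real.sqrt_sq_eq_abs, Real.norm_eq_abs, abs_abs]
  rw [h1]
  exact Real.sqrt_le_sqrt (Finset.single_le_sum (f := fun i => ‖v i‖ ^ 2)
    (fun i _ => by positivity) (Finset.mem_univ j))

/-- quantitative statistical robustness: if `Ξ` is compact and
`Fsol : 𝒫(Ξ) → ℝ^N` is `c`-Lipschitz with respect to the Kantorovich distance, then the
empirical estimator `f̂_M(ξ¹,…,ξ^M) = Fsol((1/M) Σ δ_{ξ^i})` is `(c/M) Σ ‖xⁱ − yⁱ‖`-
Lipschitz on `Ξ^M`, and the push-forward laws of the estimator satisfy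
`dl_K(P^{⊗M} ∘ f̂_M⁻¹, Q^{⊗M} ∘ f̂_M⁻¹) ≤ c · dl_K(P, Q)` for all probability
measures `P, Q` on `Ξ`. -/
theorem estimator_statistical_robustness (k N : ℕ)
    (Ξ : Set (EuclideanSpace ℝ (Fin k))) (hΞ : IsCompact Ξ)
    (c : ℝ) (hc : 0 ≤ c)
    (Fsol : Measure (EuclideanSpace ℝ (Fin k)) → EuclideanSpace ℝ (Fin N))
    (hFsol : ∀ Q₁ Q₂ : Measure (EuclideanSpace ℝ (Fin k)),
      IsProbabilityMeasure Q₁ → IsProbabilityMeasure Q₂ → Q₁ Ξᶜ = 0 → Q₂ Ξᶜ = 0 →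
      ‖Fsol Q₁ - Fsol Q₂‖ ≤ c * Kdist Q₁ Q₂)
    (M : ℕ) (hM : 0 < M) :
    (∀ x y : Fin M → EuclideanSpace ℝ (Fin k),
      (∀ i, x i ∈ Ξ) → (∀ i, y i ∈ Ξ) →
      ‖Fsol ((M : ENNReal)⁻¹ • ∑ i : Fin M, Measure.dirac (x i)) -
          Fsol ((M : ENNReal)⁻¹ • ∑ i : Fin M, Measure.dirac (y i))‖ ≤
        (c / M) * ∑ i : Fin M, ‖x i - y i‖) ∧
    (∀ P Q : Measure (EuclideanSpace ℝ (Fin k)),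
      IsProbabilityMeasure P → IsProbabilityMeasure Q → P Ξᶜ = 0 → Q Ξᶜ = 0 →
      Kdist
        (Measure.map
          (fun x : Fin M → EuclideanSpace ℝ (Fin k) =>
            Fsol ((M : ENNReal)⁻¹ • ∑ i : Fin M, Measure.dirac (x i)))
          (Measure.pi fun _ : Fin M => P))
        (Measure.map
          (fun x : Fin M → EuclideanSpace ℝ (Fin k) =>
            Fsol ((M : ENNReal)⁻¹ • ∑ i : Fin M, Measure.dirac (x i)))
          (Measure.pi fun _ : Fin M => Q)) ≤ c * Kdist P Q) := by
  classical
  have hmeasΞ : MeasurableSet Ξ := hΞ.isClosed.measurableSet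
  have part1 : ∀ x y : Fin M → EuclideanSpace ℝ (Fin k),
      (∀ i, x i ∈ Ξ) → (∀ i, y i ∈ Ξ) →
      ‖Fsol ((M : ENNReal)⁻¹ • ∑ i : Fin M, Measure.dirac (x i)) -
          Fsol ((M : ENNReal)⁻¹ • ∑ i : Fin M, Measure.dirac (y i))‖ ≤
        (c / M) * ∑ i : Fin M, ‖x i - y i‖ := by
    intro x y hx hy
    have h1 := hFsol _ _ (emp_prob hM x) (emp_prob hM y)
      (emp_null hmeasΞ x hx) (emp_null hmeasΞ y hy)
    refine h1.trans ?_
    have h2 := Kdist_emp_le x y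
    have hMne : (M : ℝ) ≠ 0 := Nat.cast_ne_zero.2 hM.ne'
    calc c * Kdist _ _ ≤ c * ((M : ℝ)⁻¹ * ∑ i : Fin M, ‖x i - y i‖) :=
          mul_le_mul_of_nonneg_left h2 hc
      _ = (c / M) * ∑ i : Fin M, ‖x i - y i‖ := by field_simp
  refine ⟨part1, ?_⟩
  intro P Q hPp hQp hPs hQs
  haveI := hPp; haveI := hQp
  rcases Set.eq_empty_or_nonempty Ξ with rfl | ⟨x₀, hx₀⟩
  · exfalso
    rw [Set.compl_empty] at hPs
    have := measure_univ (μ := P)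
    rw [hPs] at this
    exact zero_ne_one this
  set F : (Fin M → EuclideanSpace ℝ (Fin k)) → EuclideanSpace ℝ (Fin N) :=
    fun x => Fsol ((M : ENNReal)⁻¹ • ∑ i : Fin M, Measure.dirac (x i)) with hF
  set S : Set (Fin M → EuclideanSpace ℝ (Fin k)) := Set.pi Set.univ fun _ => Ξ with hS
  have hMne : (M : ℝ) ≠ 0 := Nat.cast_ne_zero.2 hM.ne'
  have hFlip : ∀ j : Fin N, LipschitzOnWith c.toNNReal (fun x => F x j) S := by
    intro j
    rw [lipschitzOnWith_iff_dist_le_mul]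
    intro x hx y hy
    have hx' : ∀ i, x i ∈ Ξ := fun i => hx i (Set.mem_univ i)
    have hy' : ∀ i, y i ∈ Ξ := fun i => hy i (Set.mem_univ i)
    have h3 : ‖F x - F y‖ ≤ (c / M) * ∑ i : Fin M, ‖x i - y i‖ := part1 x y hx' hy'
    have h4 : |F x j - F y j| ≤ ‖F x - F y‖ := by
      have := coord_abs_le_norm (F x - F y) j
      simpa using this
    have h5 : ∑ i : Fin M, ‖x i - y i‖ ≤ M * dist x y := by
      calc ∑ i : Fin M, ‖x i - y i‖ ≤ ∑ _i : Fin M, dist x y :=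
            Finset.sum_le_sum fun i _ => by
              rw [← dist_eq_norm]; exact dist_le_pi_dist x y i
        _ = M * dist x y := by
            simp [Finset.sum_const, Finset.card_univ, nsmul_eq_mul]
    rw [Real.dist_eq]
    calc |F x j - F y j| ≤ ‖F x - F y‖ := h4
      _ ≤ (c / M) * ∑ i : Fin M, ‖x i - y i‖ := h3
      _ ≤ (c / M) * (M * dist x y) := by
          refine mul_le_mul_of_nonneg_left h5 (by positivity)
      _ = c.toNNReal * dist x y := by
          rw [Real.coe_toNNReal c hc]; field_simp
  choose φ hφlip hφeq using fun j => (hFlip j).extend_real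
  set F' : (Fin M → EuclideanSpace ℝ (Fin k)) → EuclideanSpace ℝ (Fin N) :=
    fun x => (EuclideanSpace.equiv (Fin N) ℝ).symm (fun j => φ j x) with hF'
  have hF'cont : Continuous F' :=
    (EuclideanSpace.equiv (Fin N) ℝ).symm.continuous.comp
      (continuous_pi fun j => (hφlip j).continuous)
  have hF'eq : ∀ x ∈ S, F' x = F x := by
    intro x hxS
    ext j
    have h6 : F x j = φ j x := hφeq j hxS
    have h7 : F' x j = φ j x := rfl
    rw [h7, h6]
  have hpiP : (Measure.pi fun _ : Fin M => P) Sᶜ = 0 := pi_compl_null _ (fun _ => hPs)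
  have hpiQ : (Measure.pi fun _ : Fin M => Q) Sᶜ = 0 := pi_compl_null _ (fun _ => hQs)
  have hmapP : Measure.map F (Measure.pi fun _ : Fin M => P) =
      Measure.map F' (Measure.pi fun _ : Fin M => P) := by
    refine Measure.map_congr ?_
    filter_upwards [mem_ae_iff.2 hpiP] with x hxS using (hF'eq x hxS).symm
  have hmapQ : Measure.map F (Measure.pi fun _ : Fin M => Q) =
      Measure.map F' (Measure.pi fun _ : Fin M => Q) := by
    refine Measure.map_congr ?_
    filter_upwards [mem_ae_iff.2 hpiQ] with x hxS using (hF'eq x hxS).symm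
  rw [hmapP, hmapQ]
  obtain ⟨n, rfl⟩ : ∃ n, M = n + 1 := ⟨M - 1, (Nat.succ_pred_eq_of_pos hM).symm⟩
  refine Kdist_le (mul_nonneg hc (Kdist_nonneg P Q)) ?_
  intro g hg
  have hgc : Continuous g := (lip_lipschitzWith hg).continuous
  rw [integral_map hF'cont.measurable.aemeasurable hgc.aestronglyMeasurable,
      integral_map hF'cont.measurable.aemeasurable hgc.aestronglyMeasurable]
  set h : (Fin (n+1) → EuclideanSpace ℝ (Fin k)) → ℝ := fun x => g (F' x) with hh
  have hhcont : Continuous h := hgc.comp hF'cont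
  have hhlip : ∀ x y : Fin (n+1) → EuclideanSpace ℝ (Fin k),
      (∀ i, x i ∈ Ξ) → (∀ i, y i ∈ Ξ) →
      |h x - h y| ≤ (c / ((n+1 : ℕ) : ℝ)) * ∑ i : Fin (n+1), ‖x i - y i‖ := by
    intro x y hx hy
    have hxS : x ∈ S := fun i _ => hx i
    have hyS : y ∈ S := fun i _ => hy i
    calc |h x - h y| ≤ ‖F' x - F' y‖ := hg (F' x) (F' y)
      _ = ‖F x - F y‖ := by rw [hF'eq x hxS, hF'eq y hyS]
      _ ≤ (c / ((n+1 : ℕ) : ℝ)) * ∑ i : Fin (n+1), ‖x i - y i‖ := part1 x y hx hy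
  set ν : ℕ → Fin (n+1) → Measure (EuclideanSpace ℝ (Fin k)) :=
    fun t i => if (i : ℕ) < t then Q else P with hν
  haveI hνp : ∀ t i, IsProbabilityMeasure (ν t i) := fun t i => by
    rw [hν]; dsimp only; split <;> infer_instance
  have hνs : ∀ t i, (ν t i) Ξᶜ = 0 := fun t i => by
    rw [hν]; dsimp only; split
    exacts [hQs, hPs]
  set a : ℕ → ℝ := fun t => ∫ x, h x ∂Measure.pi (ν t) with ha
  have h0 : (Measure.pi fun _ : Fin (n+1) => P) = Measure.pi (ν 0) := by
    have hv : ν 0 = fun _ : Fin (n+1) => P :=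
      funext fun i => by simp only [hν]; exact if_neg (Nat.not_lt_zero _)
    rw [hv]
  have hM1 : (Measure.pi fun _ : Fin (n+1) => Q) = Measure.pi (ν (n+1)) := by
    have hv : ν (n+1) = fun _ : Fin (n+1) => Q :=
      funext fun i => by simp only [hν]; exact if_pos i.isLt
    rw [hv]
  have hstep : ∀ t, t < n + 1 → |a t - a (t+1)| ≤ (c / ((n+1 : ℕ) : ℝ)) * Kdist P Q := by
    intro t ht
    set i₀ : Fin (n+1) := ⟨t, ht⟩ with hi₀
    have e1 : ν t = Function.update (ν (t+1)) i₀ P := by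
      funext i
      rcases eq_or_ne i i₀ with heq | hne
      · subst heq
        rw [Function.update_self, hν]; dsimp only
        rw [if_neg (by simp [hi₀])]
      · rw [Function.update_of_ne hne, hν]; dsimp only
        have hit : (i : ℕ) ≠ t := fun hcon => hne (Fin.ext hcon)
        by_cases h' : (i : ℕ) < t
        · rw [if_pos h', if_pos (by omega)]
        · rw [if_neg h', if_neg (by omega)]
    have e2 : ν (t+1) = Function.update (ν (t+1)) i₀ Q := by
      funext i
      rcases eq_or_ne i i₀ with heq | hne
      · subst heq
        rw [Function.update_self, hν]; dsimp only
        rw [if_pos (by simp [hi₀])]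
      · rw [Function.update_of_ne hne]
    have hbound := step_lemma hΞ hx₀ (by positivity : (0:ℝ) ≤ c / ((n+1 : ℕ) : ℝ))
      hhcont hhlip i₀ (ν (t+1)) (fun i => hνs (t+1) i) P Q hPs hQs
    rw [← e1, ← e2] at hbound
    exact hbound
  have htel : |a 0 - a (n+1)| ≤ ((n+1 : ℕ) : ℝ) * ((c / ((n+1 : ℕ) : ℝ)) * Kdist P Q) := by
    have hsum : a (n+1) - a 0 = ∑ t ∈ Finset.range (n+1), (a (t+1) - a t) :=
      (Finset.sum_range_sub a (n+1)).symm
    calc |a 0 - a (n+1)| = |a (n+1) - a 0| := abs_sub_comm _ _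
      _ = |∑ t ∈ Finset.range (n+1), (a (t+1) - a t)| := by rw [hsum]
      _ ≤ ∑ t ∈ Finset.range (n+1), |a (t+1) - a t| := Finset.abs_sum_le_sum_abs _ _
      _ ≤ ∑ _t ∈ Finset.range (n+1), (c / ((n+1 : ℕ) : ℝ)) * Kdist P Q := by
          refine Finset.sum_le_sum fun t ht => ?_
          rw [abs_sub_comm]
          exact hstep t (Finset.mem_range.1 ht)
      _ = ((n+1 : ℕ) : ℝ) * ((c / ((n+1 : ℕ) : ℝ)) * Kdist P Q) := by
          rw [Finset.sum_const, Finset.card_range, nsmul_eq_mul]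
  have hfinal : ((n+1 : ℕ) : ℝ) * ((c / ((n+1 : ℕ) : ℝ)) * Kdist P Q) = c * Kdist P Q := by
    have : ((n+1 : ℕ) : ℝ) ≠ 0 := by positivity
    field_simp
  rw [h0, hM1]
  calc |(∫ x, h x ∂Measure.pi (ν 0)) - ∫ x, h x ∂Measure.pi (ν (n+1))|
      = |a 0 - a (n+1)| := rfl
    _ ≤ ((n+1 : ℕ) : ℝ) * ((c / ((n+1 : ℕ) : ℝ)) * Kdist P Q) := htel
    _ = c * Kdist P Q := hfinal
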